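/- arXiv:0909.4368 — 2 statements merged into one kernel-verified Lean document; each statement's English description precedes it below -/
import Mathlib

section
/- Let G be an unmixed graph as in the setup such that no cycle C_{i_1...i_r} (r ≥ 2) is contained in G. Then the relation on X defined by x_i ⪯ x_j iff x_i y_j ∈ E(G) is a partial order. -/
open SimpleGraph

/-- `C` is a vertex cover of `G`. -/
def IsVC {V : Type*} (G : SimpleGraph V) (C : Set V) : Prop :=
  ∀ ⦃u v : V⦄, G.Adj u v → u ∈ C ∨ v ∈ C

/-- `C` is a minimal (inclusion-wise) vertex cover of `G`. -/
def IsMinVC {V : Type*} (G : SimpleGraph V) (C : Set V) : Prop :=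
  IsVC G C ∧ ∀ C' : Set V, C' ⊆ C → IsVC G C' → C' = C

/-- `A` is an independent set of `G`. -/
def IsIndep {V : Type*} (G : SimpleGraph V) (A : Set V) : Prop :=
  ∀ ⦃u v : V⦄, u ∈ A → v ∈ A → ¬ G.Adj u v

/-- `A` is a maximal independent set of `G`. -/
def IsMaxIndep {V : Type*} (G : SimpleGraph V) (A : Set V) : Prop :=
  IsIndep G A ∧ ∀ A' : Set V, A ⊆ A' → IsIndep G A' → A' = A

/-- `G` is unmixed: all minimal vertex covers have the same cardinality. -/
def Unmixed {V : Type*} (G : SimpleGraph V) : Prop :=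
  ∀ C₁ C₂ : Set V, IsMinVC G C₁ → IsMinVC G C₂ → C₁.ncard = C₂.ncard

/-- Vertex type with the two classes `X = {x_1,…,x_n}` (left) and `Y = {y_1,…,y_n}` (right). -/
abbrev VT (n : ℕ) := Fin n ⊕ Fin n

/-- The vertex `x_i`. -/
def xv {n : ℕ} (i : Fin n) : VT n := Sum.inl i

/-- The vertex `y_i`. -/
def yv {n : ℕ} (i : Fin n) : VT n := Sum.inr i

/-- The 4-cycle `C_{ij}` (edges `x_iy_i, y_ix_j, x_jy_j, y_jx_i`) is contained in `G`. -/
def HasC2 {n : ℕ} (G : SimpleGraph (VT n)) (i j : Fin n) : Prop :=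
  G.Adj (xv i) (yv i) ∧ G.Adj (yv i) (xv j) ∧ G.Adj (xv j) (yv j) ∧ G.Adj (yv j) (xv i)

/-- The `2r`-cycle `C_{i_1…i_r}` given by `f : Fin r → Fin n` is contained in `G`:
edges `x_{f s} y_{f s}` and `y_{f s} x_{f (s+1)}` (cyclically). -/
def IsCycleIn {n r : ℕ} (G : SimpleGraph (VT n)) (f : Fin r → Fin n) : Prop :=
  ∀ s : Fin r, G.Adj (xv (f s)) (yv (f s)) ∧ G.Adj (yv (f s)) (xv (f (finRotate r s)))

/-- Every vertex cover of a graph on a finite type contains a minimal vertex cover. -/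
lemma exists_minVC_subset {V : Type*} [Finite V] (G : SimpleGraph V) :
    ∀ D : Set V, IsVC G D → ∃ C, C ⊆ D ∧ IsMinVC G C := by
  have key : ∀ m : ℕ, ∀ D : Set V, D.ncard = m → IsVC G D → ∃ C, C ⊆ D ∧ IsMinVC G C := by
    intro m
    induction m using Nat.strong_induction_on with
    | _ m ih =>
      intro D hcard hD
      by_cases h : ∀ C' : Set V, C' ⊆ D → IsVC G C' → C' = D
      · exact ⟨D, subset_rfl, hD, h⟩
      · push_neg at h
        obtain ⟨C', hsub, hvc, hne⟩ := h
        have hlt : C'.ncard < m :=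
          hcard ▸ Set.ncard_lt_ncard (hsub.ssubset_of_ne hne) (Set.toFinite D)
        obtain ⟨C, hC, hmin⟩ := ih _ hlt C' rfl hvc
        exact ⟨C, hC.trans hsub, hmin⟩
  exact fun D hD => key D.ncard D rfl hD

theorem adj_relation_partial_order' {n : ℕ} (G : SimpleGraph (VT n))
    (hX : IsMinVC G (Set.range (xv : Fin n → VT n)))
    (hm : ∀ i : Fin n, G.Adj (xv i) (yv i))
    (hu : Unmixed G)
    (hnc : ∀ r : ℕ, 2 ≤ r → ∀ f : Fin r → Fin n, Function.Injective f → ¬ IsCycleIn G f) :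
    (∀ i : Fin n, G.Adj (xv i) (yv i)) ∧
      (∀ i j k : Fin n, G.Adj (xv i) (yv j) → G.Adj (xv j) (yv k) → G.Adj (xv i) (yv k)) ∧
      (∀ i j : Fin n, G.Adj (xv i) (yv j) → G.Adj (xv j) (yv i) → i = j) := by
  classical
  have hxinj : Function.Injective (xv : Fin n → VT n) := fun a b h => Sum.inl_injective h
  have hXcard : (Set.range (xv : Fin n → VT n)).ncard = n := by
    rw [← Nat.card_coe_set_eq, Nat.card_range_of_injective hxinj, Nat.card_eq_fintype_card,
      Fintype.card_fin]
  refine ⟨hm, ?_, ?_⟩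
  · -- transitivity
    intro i j k hij hjk
    by_contra hik
    -- D = (X \ {x_i}) ∪ (N(x_i) ∩ Y)
    set D : Set (VT n) :=
      (Set.range (xv : Fin n → VT n) \ {xv i}) ∪ {v | (∃ m, yv m = v) ∧ G.Adj (xv i) v} with hDdef
    have hxD : ∀ m : Fin n, m ≠ i → xv m ∈ D := by
      intro m hmi
      exact Or.inl ⟨⟨m, rfl⟩, fun h => hmi (hxinj (Set.mem_singleton_iff.mp h))⟩
    have hyD : ∀ m : Fin n, G.Adj (xv i) (yv m) → yv m ∈ D := fun m h => Or.inr ⟨⟨m, rfl⟩, h⟩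
    have hxiD : xv i ∉ D := by
      rintro (⟨_, h⟩ | ⟨⟨m, hmv⟩, _⟩)
      · exact h rfl
      · exact Sum.inr_ne_inl (hmv.trans rfl : yv m = xv i)
    have hDvc : IsVC G D := by
      intro u v huv
      rcases u with a | a <;> rcases v with b | b
      · by_cases ha : a = i
        · by_cases hb : b = i
          · rw [ha, hb] at huv; exact absurd huv (G.loopless.irrefl _)
          · exact Or.inr (hxD b hb)
        · exact Or.inl (hxD a ha)
      · by_cases ha : a = i
        · rw [ha] at huv; exact Or.inr (hyD b huv)
        · exact Or.inl (hxD a ha)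
      · by_cases hb : b = i
        · rw [hb] at huv; exact Or.inl (hyD a huv.symm)
        · exact Or.inr (hxD b hb)
      · rcases hX.1 huv with ⟨m, h⟩ | ⟨m, h⟩ <;> exact absurd h Sum.inl_ne_inr
    obtain ⟨C, hCD, hCmin⟩ := exists_minVC_subset G D hDvc
    have hCcard : C.ncard = n := by rw [hu C _ hCmin hX, hXcard]
    have hxiC : xv i ∉ C := fun h => hxiD (hCD h)
    have hykD : yv k ∉ D := by
      rintro (⟨⟨m, hmv⟩, _⟩ | ⟨_, hadj⟩)
      · exact Sum.inl_ne_inr (hmv.trans rfl : xv m = yv k)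
      · exact hik hadj
    have hykC : yv k ∉ C := fun h => hykD (hCD h)
    have hxjC : xv j ∈ C := (hCmin.1 hjk).resolve_right hykC
    have hyjC : yv j ∈ C := (hCmin.1 hij).resolve_left hxiC
    set g : Fin n → VT n := fun m => if xv m ∈ C then xv m else yv m with hgdef
    have hgC : ∀ m, g m ∈ C := by
      intro m
      by_cases h : xv m ∈ C
      · simpa [hgdef, h] using h
      · have : yv m ∈ C := (hCmin.1 (hm m)).resolve_left h
        simpa [hgdef, h] using this
    have hgcases : ∀ m, g m = xv m ∨ g m = yv m := by
      intro m; by_cases h : xv m ∈ C <;> simp [hgdef, h]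
    have hginj : Function.Injective g := by
      intro a b hab
      rcases hgcases a with ha | ha <;> rcases hgcases b with hb | hb <;> rw [ha, hb] at hab
      · exact hxinj hab
      · exact absurd hab Sum.inl_ne_inr
      · exact absurd hab Sum.inr_ne_inl
      · exact Sum.inr_injective hab
    have hgj : g j = xv j := by simp [hgdef, hxjC]
    have hyj_not : yv j ∉ Set.range g := by
      rintro ⟨m, hmv⟩
      rcases hgcases m with h | h
      · rw [h] at hmv; exact Sum.inl_ne_inr hmv
      · rw [h] at hmv
        have : m = j := Sum.inr_injective hmv
        subst this
        rw [hgj] at h; exact Sum.inl_ne_inr h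
    have hsub : insert (yv j) (Set.range g) ⊆ C := by
      rintro v (rfl | ⟨m, rfl⟩)
      · exact hyjC
      · exact hgC m
    have hcard1 : (insert (yv j) (Set.range g)).ncard = n + 1 := by
      rw [Set.ncard_insert_of_notMem hyj_not (Set.toFinite _),
        ← Nat.card_coe_set_eq, Nat.card_range_of_injective hginj,
        Nat.card_eq_fintype_card, Fintype.card_fin]
    have := Set.ncard_le_ncard hsub (Set.toFinite C)
    omega
  · -- antisymmetry
    intro i j hij hji
    by_contra hne
    have hfinj : Function.Injective (![i, j] : Fin 2 → Fin n) := by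
      intro a b hab
      fin_cases a <;> fin_cases b <;> simp_all <;> exact absurd hab.symm hne
    apply hnc 2 le_rfl ![i, j] hfinj
    intro s
    have h0 : finRotate 2 (0 : Fin 2) = 1 := by decide
    have h1 : finRotate 2 (1 : Fin 2) = 0 := by decide
    fin_cases s
    · refine ⟨hm i, ?_⟩
      show G.Adj (yv (![i,j] 0)) (xv (![i,j] (finRotate 2 0)))
      rw [h0]; simpa using hji.symm
    · refine ⟨hm j, ?_⟩
      show G.Adj (yv (![i,j] 1)) (xv (![i,j] (finRotate 2 1)))
      rw [h1]; simpa using hij.symm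

/-- For an unmixed graph `G` (setup (*)) with no cycle `C_{i_1…i_r}` (`r ≥ 2`), the relation
`x_i ⪯ x_j ⟺ x_iy_j ∈ E(G)` is a partial order: reflexive, transitive and antisymmetric. -/
theorem adj_relation_partial_order {n : ℕ} (G : SimpleGraph (VT n))
    (hni : ∀ v : VT n, ∃ u : VT n, G.Adj u v)
    (hX : IsMinVC G (Set.range (xv : Fin n → VT n)))
    (hY : IsMaxIndep G (Set.range (yv : Fin n → VT n)))
    (hm : ∀ i : Fin n, G.Adj (xv i) (yv i))
    (hht : ∀ C : Set (VT n), IsVC G C → n ≤ C.ncard)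
    (hu : Unmixed G)
    (hnc : ∀ r : ℕ, 2 ≤ r → ∀ f : Fin r → Fin n, Function.Injective f → ¬ IsCycleIn G f) :
    (∀ i : Fin n, G.Adj (xv i) (yv i)) ∧
      (∀ i j k : Fin n, G.Adj (xv i) (yv j) → G.Adj (xv j) (yv k) → G.Adj (xv i) (yv k)) ∧
      (∀ i j : Fin n, G.Adj (xv i) (yv j) → G.Adj (xv j) (yv i) → i = j) :=
  adj_relation_partial_order' G hX hm hu hnc
end

section
/- Let G be an unmixed graph as in the setup, additionally satisfying: x_iy_j ∈ E(G) implies i ≤ j, and G contains no cycle C_{ij}. Then #E(G) ≤ n(n+1)/2. -/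
open SimpleGraph

section Aux

variable {n : ℕ} {G : SimpleGraph (VT n)}

/-- Projection `x_i ↦ i`, `y_i ↦ i`. -/
def gv {n : ℕ} : VT n → Fin n := Sum.elim id id

lemma exists_maxIndep (A : Set (VT n)) (hA : IsIndep G A) :
    ∃ B : Set (VT n), A ⊆ B ∧ IsMaxIndep G B := by
  classical
  obtain ⟨t, ht, htmax⟩ : ∃ t ∈ Finset.univ.filter (fun t : Finset (VT n) => IsIndep G ↑t ∧ A ⊆ ↑t),
      ∀ x ∈ Finset.univ.filter (fun t : Finset (VT n) => IsIndep G ↑t ∧ A ⊆ ↑t), ¬ t < x := by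
    obtain ⟨t, ht⟩ := Finset.exists_maximal
      (s := Finset.univ.filter (fun t : Finset (VT n) => IsIndep G ↑t ∧ A ⊆ ↑t))
      ⟨A.toFinset, by simp [Set.coe_toFinset, hA]⟩
    exact ⟨t, ht.1, fun x hx hlt => hlt.not_ge (ht.2 hx hlt.le)⟩
  simp only [Finset.mem_filter, Finset.mem_univ, true_and] at ht htmax
  refine ⟨↑t, ht.2, ht.1, fun A' hsub hA' => ?_⟩
  have hfin : A'.Finite := Set.toFinite A'
  have h1 : t ⊆ hfin.toFinset := by
    rw [← Finset.coe_subset, Set.Finite.coe_toFinset]; exact hsub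
  have h2 : ¬ t < hfin.toFinset :=
    htmax _ ⟨by rwa [Set.Finite.coe_toFinset], by rw [Set.Finite.coe_toFinset]; exact ht.2.trans hsub⟩
  have ht' : t = hfin.toFinset := by
    by_contra hne
    exact h2 (lt_of_le_of_ne h1 hne)
  rw [← Set.Finite.coe_toFinset hfin, ← ht']

lemma compl_minVC {B : Set (VT n)} (hB : IsMaxIndep G B) : IsMinVC G Bᶜ := by
  constructor
  · intro u v huv
    by_contra h
    push_neg at h
    exact hB.1 (by simpa using h.1) (by simpa using h.2) huv
  · intro C' hsub hC'
    refine Set.Subset.antisymm hsub (fun v hv => ?_)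
    by_contra hvC
    have hvB : v ∉ B := hv
    have hex : ∃ u ∈ B, G.Adj u v := by
      by_contra hno
      push_neg at hno
      have hind : IsIndep G (insert v B) := by
        intro a b ha hb hab
        rcases ha with rfl | ha
        · rcases hb with rfl | hb
          · exact G.irrefl hab
          · exact hno b hb hab.symm
        · rcases hb with rfl | hb
          · exact hno a ha hab
          · exact hB.1 ha hb hab
      have := hB.2 _ (Set.subset_insert _ _) hind
      exact hvB (this ▸ Set.mem_insert v B)
    obtain ⟨u, huB, huv⟩ := hex
    rcases hC' huv with h | h
    · exact (hsub h) huB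
    · exact hvC h

lemma ncard_range_xv : (Set.range (xv : Fin n → VT n)).ncard = n := by
  rw [← Set.image_univ, Set.ncard_image_of_injective Set.univ
    (show Function.Injective (xv : Fin n → VT n) from fun a b h => Sum.inl.inj h),
    Set.ncard_univ, Nat.card_eq_fintype_card, Fintype.card_fin]

lemma key_no_both (hm : ∀ i : Fin n, G.Adj (xv i) (yv i))
    (hX : IsMinVC G (Set.range (xv : Fin n → VT n))) (hu : Unmixed G)
    {i j : Fin n} (hij : i < j)
    (hxy : G.Adj (xv i) (yv j)) (hxx : G.Adj (xv i) (xv j)) : False := by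
  obtain ⟨B, hiB, hBmax⟩ := exists_maxIndep ({xv i} : Set (VT n)) (by
    intro a b ha hb hab
    rw [Set.mem_singleton_iff] at ha hb
    subst ha; subst hb; exact G.irrefl hab)
  have hxiB : xv i ∈ B := hiB rfl
  have hBc := compl_minVC hBmax
  have hcard : Bᶜ.ncard = n := (hu _ _ hBc hX).trans ncard_range_xv
  have hBcard : B.ncard = n := by
    have h := Set.ncard_add_ncard_compl B
    rw [hcard] at h
    have h2 : Nat.card (VT n) = n + n := by
      simp [Nat.card_eq_fintype_card]
    omega
  have hinj : Set.InjOn gv B := by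
    rintro (a | a) ha (b | b) hb hab <;> simp only [gv, Sum.elim_inl, Sum.elim_inr, id] at hab <;>
      subst hab
    · rfl
    · exact absurd (hm a) (hBmax.1 ha hb)
    · exact absurd (hm a) (hBmax.1 hb ha)
    · rfl
  have hjmem : j ∉ gv '' B := by
    rintro ⟨(a | a), ha, h⟩ <;> simp only [gv, Sum.elim_inl, Sum.elim_inr, id] at h <;> subst h
    · exact hBmax.1 hxiB ha hxx
    · exact hBmax.1 hxiB ha hxy
  have hsub : gv '' B ⊆ {j}ᶜ := fun k hk hkj => by
    rw [Set.mem_singleton_iff] at hkj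
    exact hjmem (hkj ▸ hk)
  have h1 : (gv '' B).ncard ≤ ({j}ᶜ : Set (Fin n)).ncard :=
    Set.ncard_le_ncard hsub (Set.toFinite _)
  rw [Set.ncard_image_of_injOn hinj, hBcard] at h1
  have h3 := Set.ncard_add_ncard_compl ({j} : Set (Fin n))
  rw [Set.ncard_singleton, Nat.card_eq_fintype_card, Fintype.card_fin] at h3
  have hn : 0 < n := j.pos
  omega

end Aux

/-- For an unmixed graph `G` in the setup (*) satisfying (**) (`x_iy_j ∈ E(G) ⟹ i ≤ j`)
and containing no cycle `C_{ij}`, the number of edges is at most `n(n+1)/2`. -/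
theorem CM_edge_bound {n : ℕ} (G : SimpleGraph (VT n)) [DecidableRel G.Adj]
    (hni : ∀ v : VT n, ∃ u : VT n, G.Adj u v)
    (hX : IsMinVC G (Set.range (xv : Fin n → VT n)))
    (hY : IsMaxIndep G (Set.range (yv : Fin n → VT n)))
    (hm : ∀ i : Fin n, G.Adj (xv i) (yv i))
    (hht : ∀ C : Set (VT n), IsVC G C → n ≤ C.ncard)
    (hu : Unmixed G)
    (ho : ∀ i j : Fin n, G.Adj (xv i) (yv j) → i ≤ j)
    (h2 : ∀ i j : Fin n, i < j → ¬ HasC2 G i j) :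
    G.edgeFinset.card ≤ n * (n + 1) / 2 := by
  classical
  have hadj : ∀ (a b : VT n), s(a,b) ∈ G.edgeFinset → G.Adj a b := fun a b h =>
    G.mem_edgeSet.mp (SimpleGraph.mem_edgeFinset.mp h)
  have hform : ∀ e ∈ G.edgeFinset,
      (∃ i j : Fin n, i ≤ j ∧ e = s(xv i, yv j)) ∨
      (∃ i j : Fin n, i < j ∧ e = s(xv i, xv j)) := by
    intro e he
    rw [SimpleGraph.mem_edgeFinset] at he
    induction e using Sym2.ind with
    | _ a b =>
      rw [SimpleGraph.mem_edgeSet] at he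
      rcases a with i | i <;> rcases b with j | j
      · rcases lt_trichotomy i j with h | h | h
        · exact Or.inr ⟨i, j, h, rfl⟩
        · subst h; exact (G.irrefl he).elim
        · exact Or.inr ⟨j, i, h, Sym2.eq_swap⟩
      · exact Or.inl ⟨i, j, ho i j he, rfl⟩
      · exact Or.inl ⟨j, i, ho j i he.symm, Sym2.eq_swap⟩
      · exact absurd he (hY.1 ⟨i, rfl⟩ ⟨j, rfl⟩)
  have hinjOn : Set.InjOn (Sym2.map gv) (G.edgeFinset : Set (Sym2 (VT n))) := by
    intro e1 he1 e2 he2 heq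
    rw [Finset.mem_coe] at he1 he2
    rcases hform e1 he1 with ⟨i, j, hij, rfl⟩ | ⟨i, j, hij, rfl⟩ <;>
      rcases hform e2 he2 with ⟨k, l, hkl, rfl⟩ | ⟨k, l, hkl, rfl⟩ <;>
      simp only [Sym2.map_pair_eq, gv, xv, yv, Sum.elim_inl, Sum.elim_inr, id,
        Sym2.eq_iff] at heq
    · rcases heq with ⟨rfl, rfl⟩ | ⟨rfl, rfl⟩
      · rfl
      · have h : i = j := le_antisymm hij hkl
        subst h; rfl
    · rcases heq with ⟨rfl, rfl⟩ | ⟨rfl, rfl⟩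
      · exact (key_no_both hm hX hu hkl (hadj _ _ he1) (hadj _ _ he2)).elim
      · exact absurd hij (not_le.mpr hkl)
    · rcases heq with ⟨rfl, rfl⟩ | ⟨rfl, rfl⟩
      · exact (key_no_both hm hX hu hij (hadj _ _ he2) (hadj _ _ he1)).elim
      · exact absurd hkl (not_le.mpr hij)
    · rcases heq with ⟨rfl, rfl⟩ | ⟨rfl, rfl⟩
      · rfl
      · exact absurd hkl (lt_asymm hij)
  have hcard : G.edgeFinset.card ≤ (Finset.univ : Finset (Sym2 (Fin n))).card :=
    Finset.card_le_card_of_injOn (Sym2.map gv) (fun _ _ => Finset.mem_univ _) hinjOn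
  rw [Finset.card_univ, Sym2.card, Fintype.card_fin, Nat.choose_two_right,
    Nat.add_sub_cancel, Nat.mul_comm] at hcard
  exact hcard
end
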